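/- arXiv:1010.2288 — 3 statements merged into one kernel-verified Lean document; each statement's English description precedes it below -/
import Mathlib

section
/- Given positive integers m and k, there is a unique way to pick an integer s ≥ 0 and integers n_k, n_{k-1}, …, n_{k-s} such that m = C(n_k,k) + C(n_{k-1},k-1) + … + C(n_{k-s},k-s) and n_k > n_{k-1} > … > n_{k-s} ≥ k-s > 0, where C(a,b) denotes the binomial coefficient. -/
private def cascadeSum : ℕ → List ℕ → ℕ
  | _, [] => 0
  | k, n :: T => Nat.choose n k + cascadeSum (k - 1) T

private def CascGood (k : ℕ) (L : List ℕ) : Prop :=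
  L ≠ [] ∧ L.Chain' (· > ·) ∧ L.length ≤ k ∧ k - (L.length - 1) ≤ L.getLastD 0

private lemma cascadeSum_eq (k : ℕ) (L : List ℕ) :
    cascadeSum k L = ∑ i ∈ Finset.range L.length, Nat.choose (L.getD i 0) (k - i) := by
  induction L generalizing k with
  | nil => simp [cascadeSum]
  | cons n T ih =>
    rw [cascadeSum, List.length_cons, Finset.sum_range_succ']
    simp only [List.getD_cons_succ, List.getD_cons_zero, Nat.sub_zero]
    rw [ih (k - 1), add_comm]
    congr 1
    apply Finset.sum_congr rfl
    intro i _
    congr 1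
    omega

private lemma cascGood_cons {k n a : ℕ} {T : List ℕ} (h : CascGood k (n :: a :: T)) :
    CascGood (k - 1) (a :: T) := by
  obtain ⟨-, hc, hl, hlast⟩ := h
  simp only [List.getLastD_cons, List.length_cons] at hlast hl
  refine ⟨by simp, hc.tail, ?_, ?_⟩ <;>
    simp only [List.getLastD_cons, List.length_cons] <;> omega

private lemma cascGood_head_ge : ∀ (T : List ℕ) (n k : ℕ), CascGood k (n :: T) → k ≤ n := by
  intro T
  induction T with
  | nil =>
    intro n k h
    obtain ⟨-, -, -, hlast⟩ := h
    simpa using hlast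
  | cons a T ih =>
    intro n k h
    have h' := cascGood_cons h
    have h1 := ih a (k - 1) h'
    have hn : n > a := (List.isChain_cons_cons.mp h.2.1).1
    omega

private lemma cascadeSum_lt : ∀ (T : List ℕ) (n k : ℕ), 0 < k → CascGood k (n :: T) →
    cascadeSum k (n :: T) < Nat.choose (n + 1) k := by
  intro T
  induction T with
  | nil =>
    intro n k hk h
    have hn : k ≤ n := cascGood_head_ge _ _ _ h
    obtain ⟨k, rfl⟩ : ∃ k', k = k' + 1 := ⟨k - 1, by omega⟩
    rw [cascadeSum, cascadeSum, Nat.choose_succ_succ']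
    have hp : 0 < Nat.choose n k := Nat.choose_pos (by omega)
    omega
  | cons a T ih =>
    intro n k hk h
    have hk2 : 2 ≤ k := by
      have := h.2.2.1
      simp only [List.length_cons] at this
      omega
    have h' := cascGood_cons h
    have h1 : cascadeSum (k - 1) (a :: T) < Nat.choose (a + 1) (k - 1) :=
      ih a (k - 1) (by omega) h'
    have hna : a < n := (List.isChain_cons_cons.mp h.2.1).1
    have h2 : Nat.choose (a + 1) (k - 1) ≤ Nat.choose n (k - 1) :=
      Nat.choose_le_choose _ (by omega)
    obtain ⟨k', rfl⟩ : ∃ k', k = k' + 1 := ⟨k - 1, by omega⟩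
    rw [cascadeSum, Nat.choose_succ_succ']
    simp only [Nat.add_sub_cancel] at h1 h2 ⊢
    omega

private lemma lt_choose_add (m k : ℕ) (hk : 0 < k) : m < Nat.choose (m + k) k := by
  induction m with
  | zero => simp [Nat.choose_pos (le_refl k)]
  | succ m ih =>
    obtain ⟨k', rfl⟩ : ∃ k', k = k' + 1 := ⟨k - 1, by omega⟩
    have he : m + 1 + (k' + 1) = (m + (k' + 1)) + 1 := by omega
    rw [he, Nat.choose_succ_succ']
    have h2 : 0 < Nat.choose (m + (k' + 1)) k' := Nat.choose_pos (by omega)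
    omega

private lemma casc_exists : ∀ m k : ℕ, 0 < k → 0 < m →
    ∃ L, CascGood k L ∧ cascadeSum k L = m := by
  intro m
  induction m using Nat.strong_induction_on with
  | _ m ih =>
    intro k hk hm
    classical
    set P : ℕ → Prop := fun n => Nat.choose n k ≤ m with hP
    have hPk : P k := by simp [hP, Nat.choose_self]; omega
    set n := Nat.findGreatest P (m + k) with hn
    have hkn : k ≤ n := Nat.le_findGreatest (by omega) hPk
    have hspec : Nat.choose n k ≤ m := Nat.findGreatest_spec (P := P) (by omega) hPk
    have hupper : m < Nat.choose (n + 1) k := by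
      by_cases hc : n + 1 ≤ m + k
      · have := Nat.findGreatest_is_greatest
          (show Nat.findGreatest P (m + k) < n + 1 by omega) hc
        simpa [hP] using this
      · have h1 : m < Nat.choose (m + k) k := lt_choose_add m k hk
        have h2 : Nat.choose (m + k) k ≤ Nat.choose (n + 1) k :=
          Nat.choose_le_choose _ (by omega)
        omega
    have hcp : 0 < Nat.choose n k := Nat.choose_pos hkn
    by_cases hm' : m - Nat.choose n k = 0
    · refine ⟨[n], ⟨by simp, List.isChain_singleton _, by simp; omega, by simpa using hkn⟩, ?_⟩
      rw [cascadeSum, cascadeSum]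
      omega
    · have hk2 : 2 ≤ k := by
        by_contra hc
        have hk1 : k = 1 := by omega
        subst hk1
        simp [Nat.choose_one_right] at hspec hupper hm'
        omega
      obtain ⟨L', hG', hS'⟩ := ih (m - Nat.choose n k) (by omega) (k - 1) (by omega) (by omega)
      obtain ⟨a, T, rfl⟩ : ∃ a T, L' = a :: T := by
        cases L' with
        | nil => exact absurd rfl hG'.1
        | cons a T => exact ⟨a, T, rfl⟩
      have hak : k - 1 ≤ a := cascGood_head_ge _ _ _ hG'
      have hfirst : Nat.choose a (k - 1) ≤ m - Nat.choose n k := by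
        rw [← hS', cascadeSum]; omega
      have hsmall : m - Nat.choose n k < Nat.choose n (k - 1) := by
        obtain ⟨k1, rfl⟩ : ∃ k1, k = k1 + 1 := ⟨k - 1, by omega⟩
        rw [Nat.choose_succ_succ'] at hupper
        simp only [Nat.add_sub_cancel]
        omega
      have han : a < n := by
        by_contra hc
        have : Nat.choose n (k - 1) ≤ Nat.choose a (k - 1) :=
          Nat.choose_le_choose _ (by omega)
        omega
      obtain ⟨-, hc', hl', hlast'⟩ := hG'
      refine ⟨n :: a :: T, ⟨by simp, List.isChain_cons_cons.mpr ⟨han, hc'⟩, ?_, ?_⟩, ?_⟩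
      · simp only [List.length_cons] at hl' ⊢
        omega
      · simp only [List.getLastD_cons, List.length_cons] at hlast' ⊢
        omega
      · rw [cascadeSum, hS']
        omega

private lemma casc_unique : ∀ m k : ℕ, 0 < k → ∀ L L', CascGood k L → CascGood k L' →
    cascadeSum k L = m → cascadeSum k L' = m → L = L' := by
  intro m
  induction m using Nat.strong_induction_on with
  | _ m ih =>
    intro k hk L L' hL hL' hs hs'
    obtain ⟨n, T, rfl⟩ : ∃ n T, L = n :: T := by
      cases L with
      | nil => exact absurd rfl hL.1
      | cons n T => exact ⟨n, T, rfl⟩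
    obtain ⟨n', T', rfl⟩ : ∃ n T, L' = n :: T := by
      cases L' with
      | nil => exact absurd rfl hL'.1
      | cons n T => exact ⟨n, T, rfl⟩
    rw [cascadeSum] at hs hs'
    have hb : Nat.choose n k + cascadeSum (k - 1) T < Nat.choose (n + 1) k := by
      have := cascadeSum_lt T n k hk hL
      rwa [cascadeSum] at this
    have hb' : Nat.choose n' k + cascadeSum (k - 1) T' < Nat.choose (n' + 1) k := by
      have := cascadeSum_lt T' n' k hk hL'
      rwa [cascadeSum] at this
    have hnk : k ≤ n := cascGood_head_ge _ _ _ hL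
    have hnk' : k ≤ n' := cascGood_head_ge _ _ _ hL'
    have key : ∀ a b : ℕ, Nat.choose a k ≤ m → m < Nat.choose (b + 1) k → a ≤ b := by
      intro a b h1 h2
      by_contra hc
      have : Nat.choose (b + 1) k ≤ Nat.choose a k := Nat.choose_le_choose _ (by omega)
      omega
    have hnn : n = n' := by
      have h1 : n ≤ n' := key n n' (by omega) (by omega)
      have h2 : n' ≤ n := key n' n (by omega) (by omega)
      omega
    subst hnn
    -- each nonempty tail has positive sum
    have tail_pos : ∀ (a : ℕ) (T2 : List ℕ), CascGood k (n :: a :: T2) →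
        0 < cascadeSum (k - 1) (a :: T2) := by
      intro a T2 hG
      have hak : k - 1 ≤ a := cascGood_head_ge _ _ _ (cascGood_cons hG)
      have : 0 < Nat.choose a (k - 1) := Nat.choose_pos hak
      rw [cascadeSum]
      omega
    cases T with
    | nil =>
      cases T' with
      | nil => rfl
      | cons a' T2' =>
        have := tail_pos a' T2' hL'
        rw [cascadeSum] at hs
        omega
    | cons a T2 =>
      cases T' with
      | nil =>
        have := tail_pos a T2 hL
        rw [cascadeSum] at hs'
        omega
      | cons a' T2' =>
        have hk2 : 2 ≤ k := by
          have := hL.2.2.1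
          simp only [List.length_cons] at this
          omega
        have hcp : 0 < Nat.choose n k := Nat.choose_pos hnk
        have htp := tail_pos a T2 hL
        have heq : cascadeSum (k - 1) (a :: T2) = m - Nat.choose n k := by omega
        have heq' : cascadeSum (k - 1) (a' :: T2') = m - Nat.choose n k := by omega
        have := ih (m - Nat.choose n k) (by omega) (k - 1) (by omega)
          (a :: T2) (a' :: T2') (cascGood_cons hL) (cascGood_cons hL') heq heq'
        rw [this]

/-- The Kruskal-Katona cascade representation: there is a unique list
`L = [n_k, n_{k-1}, …, n_{k-s}]` (so `s = L.length - 1`) with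
`m = Σ_i C(L[i], k-i)`, `n_k > n_{k-1} > … > n_{k-s}`, and `n_{k-s} ≥ k-s > 0`
(the latter being `L.length ≤ k` together with `k - (L.length - 1) ≤ L.getLastD 0`). -/
theorem stmt10 (m k : ℕ) (hm : 0 < m) (hk : 0 < k) :
    ∃! L : List ℕ,
      L ≠ [] ∧
      m = ∑ i ∈ Finset.range L.length, Nat.choose (L.getD i 0) (k - i) ∧
      L.Chain' (· > ·) ∧
      L.length ≤ k ∧
      k - (L.length - 1) ≤ L.getLastD 0 := by
  obtain ⟨L, hG, hS⟩ := casc_exists m k hk hm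
  refine ⟨L, ⟨hG.1, by rw [← cascadeSum_eq]; exact hS.symm, hG.2.1, hG.2.2.1, hG.2.2.2⟩, ?_⟩
  rintro L' ⟨h1, h2, h3, h4, h5⟩
  exact casc_unique m k hk L' L ⟨h1, h3, h4, h5⟩ hG
    (by rw [← cascadeSum_eq] at h2; exact h2.symm) hS
end

section
/- Let r ≥ k > p ≥ 1 be integers and let g be a real-valued function on the natural numbers such that for all positive integers m and n, if T(nr,k;r) ≤ m ≤ T((n+1)r,k;r) then T(nr,p;r) ≤ g(m) ≤ T((n+1)r,p;r). Then g(m)/m^{p/k} converges, as m → ∞, to C(r,p)·C(r,k)^{-p/k}, where C(a,b) denotes the binomial coefficient. -/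
/-- `turanCliqueCount n k r` is the number of `k`-vertex cliques in the Turán graph `T_{n,r}`. -/
noncomputable def turanCliqueCount (n k r : ℕ) : ℕ :=
  ((SimpleGraph.turanGraph n r).cliqueSet k).ncard

open SimpleGraph Finset

lemma clique_iff (m r k : ℕ) (s : Finset (Fin (m * r))) :
    (turanGraph (m * r) r).IsNClique k s ↔
      (Set.InjOn (fun v : Fin (m * r) => v.val % r) s ∧ s.card = k) := by
  constructor
  · rintro ⟨hc, hcard⟩
    refine ⟨fun a ha b hb hab => ?_, hcard⟩
    by_contra hne
    exact (hc ha hb hne) (by simpa [turanGraph, Fin.ext_iff] using hab)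
  · rintro ⟨hinj, hcard⟩
    refine ⟨fun a ha b hb hab => ?_, hcard⟩
    simp only [turanGraph, Fin.ext_iff]
    intro h
    exact hab (hinj ha hb h)

lemma turan_count (m r k : ℕ) (hr : 0 < r) :
    turanCliqueCount (m * r) k r = r.choose k * m ^ k := by
  classical
  set f : Fin (m * r) → Fin r := fun v => ⟨v.val % r, Nat.mod_lt _ hr⟩ with hf
  have hlt : ∀ (i : Fin r) (j : Fin m), (i : ℕ) + r * j < m * r := by
    rintro ⟨i, hi⟩ ⟨j, hj⟩
    calc i + r * j < r + r * j := by omega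
    _ = r * (j + 1) := by ring
    _ ≤ r * m := Nat.mul_le_mul_left _ (by omega)
    _ = m * r := Nat.mul_comm _ _
  have hmod : ∀ (i : Fin r) (j : Fin m), ((i : ℕ) + r * j) % r = i :=
    fun i j => by rw [Nat.add_mul_mod_self_left, Nat.mod_eq_of_lt i.isLt]
  have hdiv : ∀ (i : Fin r) (j : Fin m), ((i : ℕ) + r * j) / r = j :=
    fun i j => by rw [Nat.add_mul_div_left _ _ hr, Nat.div_eq_of_lt i.isLt, Nat.zero_add]
  have hvdiv : ∀ v : Fin (m * r), v.val / r < m :=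
    fun v => Nat.div_lt_of_lt_mul (Nat.mul_comm m r ▸ v.isLt)
  set C : Finset (Finset (Fin (m * r))) := (turanGraph (m * r) r).cliqueFinset k with hC
  have hmemC : ∀ s, s ∈ C ↔ Set.InjOn (fun v : Fin (m*r) => v.val % r) ↑s ∧ s.card = k := by
    intro s; rw [hC, SimpleGraph.mem_cliqueFinset_iff, clique_iff]
  have himg : ∀ s ∈ C, s.image f ∈ (univ : Finset (Fin r)).powersetCard k := by
    intro s hs
    rw [Finset.mem_powersetCard]
    refine ⟨Finset.subset_univ _, ?_⟩
    rw [Finset.card_image_of_injOn, (hmemC s |>.mp hs).2]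
    intro a ha b hb hab
    exact (hmemC s |>.mp hs).1 ha hb (by simpa [hf, Fin.ext_iff] using hab)
  have key : C.card = ∑ t ∈ (univ : Finset (Fin r)).powersetCard k,
      (C.filter (fun s => s.image f = t)).card :=
    Finset.card_eq_sum_card_fiberwise himg
  have fiber : ∀ t ∈ (univ : Finset (Fin r)).powersetCard k,
      (C.filter (fun s => s.image f = t)).card = m ^ k := by
    intro t ht
    have htc : t.card = k := (Finset.mem_powersetCard.mp ht).2
    have hpc : (t.pi (fun _ => (univ : Finset (Fin m)))).card = m ^ k := by
      rw [Finset.card_pi, Finset.prod_const, Finset.card_univ, Fintype.card_fin, htc]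
    rw [← hpc]
    have hmemimg : ∀ (s : Finset (Fin (m*r))) (_ : s ∈ C.filter (fun s => s.image f = t))
        (a : Fin r) (_ : a ∈ t), ∃ v ∈ s, f v = a := by
      intro s hs a ha
      apply Finset.mem_image.mp
      rw [(Finset.mem_filter.mp hs).2]
      exact ha
    have hJinj : ∀ g : (∀ a ∈ t, Fin m), Set.InjOn
        (fun a : {x // x ∈ t} => (⟨(a.1 : ℕ) + r * (g a.1 a.2 : ℕ), hlt _ _⟩ : Fin (m * r)))
        ↑t.attach := by
      rintro g a _ b _ hab
      have := congrArg (fun v : Fin (m*r) => v.val % r) hab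
      simp only [hmod] at this
      exact Subtype.ext (Fin.ext this)
    have hjmem : ∀ g : (∀ a ∈ t, Fin m), (t.attach.image
        (fun a => (⟨(a.1 : ℕ) + r * (g a.1 a.2 : ℕ), hlt _ _⟩ : Fin (m * r)))) ∈
        C.filter (fun s => s.image f = t) := by
      intro g
      rw [Finset.mem_filter]
      have himgeq : (t.attach.image
          (fun a => (⟨(a.1 : ℕ) + r * (g a.1 a.2 : ℕ), hlt _ _⟩ : Fin (m * r)))).image f = t := by
        rw [Finset.image_image]
        have : (f ∘ fun a : {x // x ∈ t} => (⟨(a.1 : ℕ) + r * (g a.1 a.2 : ℕ), hlt _ _⟩ :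
            Fin (m*r))) = fun a => a.1 := by
          funext a
          simp [hf, Fin.ext_iff, hmod]
        rw [this, Finset.attach_image_val]
      refine ⟨?_, himgeq⟩
      rw [hmemC]
      constructor
      · intro x hx y hy hxy
        simp only [Finset.coe_image, Set.mem_image] at hx hy
        obtain ⟨a, ha, rfl⟩ := hx
        obtain ⟨b, hb, rfl⟩ := hy
        simp only [hmod] at hxy
        have : a = b := Subtype.ext (Fin.ext hxy)
        subst this; rfl
      · rw [Finset.card_image_of_injOn (hJinj g), Finset.card_attach, htc]
    refine Finset.card_bij'
      (i := fun s hs => fun a ha => (⟨(hmemimg s hs a ha).choose.val / r, hvdiv _⟩ : Fin m))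
      (j := fun g _ => t.attach.image
        (fun a => (⟨(a.1 : ℕ) + r * (g a.1 a.2 : ℕ), hlt _ _⟩ : Fin (m * r)))) ?_
        (fun g _ => hjmem g) ?_ ?_
    · intro s hs
      simp [Finset.mem_pi]
    · -- left inverse : J (i s) = s
      intro s hs
      have hsc : s.card = k := (hmemC s |>.mp (Finset.mem_filter.mp hs).1).2
      apply Finset.eq_of_subset_of_card_le
      · intro x hx
        simp only [Finset.mem_image] at hx
        obtain ⟨a, _, rfl⟩ := hx
        obtain ⟨hmem, heq⟩ := (hmemimg s hs a.1 a.2).choose_spec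
        have hgoal : ((⟨(a.1 : ℕ) + r * (((fun a ha => (⟨(hmemimg s hs a ha).choose.val / r,
            hvdiv _⟩ : Fin m)) a.1 a.2 : Fin m) : ℕ), hlt _ _⟩ : Fin (m*r))) =
            (hmemimg s hs a.1 a.2).choose := by
          apply Fin.ext
          show (a.1 : ℕ) + r * ((hmemimg s hs a.1 a.2).choose.val / r) =
            (hmemimg s hs a.1 a.2).choose.val
          have hmodv : (a.1 : ℕ) = (hmemimg s hs a.1 a.2).choose.val % r := by
            have := congrArg Fin.val heq
            simp [hf] at this
            omega
          rw [hmodv, Nat.mod_add_div]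
        rw [hgoal]
        exact hmem
      · rw [hsc]
        have := Finset.card_image_of_injOn
          (hJinj (fun a ha => (⟨(hmemimg s hs a ha).choose.val / r, hvdiv _⟩ : Fin m)))
        rw [this, Finset.card_attach, htc]
    · -- right inverse : i (J g) = g
      intro g hg
      funext a ha
      apply Fin.ext
      show (hmemimg _ (hjmem g) a ha).choose.val / r = (g a ha : ℕ)
      obtain ⟨hmem, heq⟩ := (hmemimg _ (hjmem g) a ha).choose_spec
      obtain ⟨⟨bv, hbv⟩, _, hbeq⟩ := Finset.mem_image.mp hmem
      have hba : bv = a := by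
        have h1 := congrArg Fin.val heq
        have h2 := congrArg Fin.val hbeq
        simp only [hf] at h1
        simp only at h2
        apply Fin.ext
        rw [← h1, ← h2, hmod]
      subst hba
      have h2 := congrArg Fin.val hbeq
      simp only at h2
      rw [← h2, hdiv]
  rw [turanCliqueCount, ← SimpleGraph.coe_cliqueFinset, Set.ncard_coe_finset, ← hC, key,
    Finset.sum_congr rfl fiber, Finset.sum_const, Finset.card_powersetCard, Finset.card_univ,
    Fintype.card_fin, smul_eq_mul]

lemma rpow_helper (C x : ℝ) (hC : 0 ≤ C) (hx : 0 ≤ x) (p k : ℕ) (hk : k ≠ 0) :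
    (C * x ^ k) ^ ((p : ℝ) / (k : ℝ)) = C ^ ((p : ℝ) / (k : ℝ)) * x ^ p := by
  rw [Real.mul_rpow hC (by positivity)]
  congr 1
  rw [← Real.rpow_natCast x k, ← Real.rpow_natCast x p, ← Real.rpow_mul hx]
  congr 1
  field_simp

theorem stmt13 (r k p : ℕ) (hrk : k ≤ r) (hpk : p < k) (hp : 1 ≤ p)
    (g : ℕ → ℝ)
    (hg : ∀ m n : ℕ, 0 < m → 0 < n →
      turanCliqueCount (n * r) k r ≤ m → m ≤ turanCliqueCount ((n + 1) * r) k r →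
      (turanCliqueCount (n * r) p r : ℝ) ≤ g m ∧
        g m ≤ (turanCliqueCount ((n + 1) * r) p r : ℝ)) :
    Filter.Tendsto (fun m : ℕ => g m / (m : ℝ) ^ ((p : ℝ) / (k : ℝ))) Filter.atTop
      (nhds ((r.choose p : ℝ) * (r.choose k : ℝ) ^ (-((p : ℝ) / (k : ℝ))))) := by
  classical
  open Filter Real in
  have hk0 : k ≠ 0 := by omega
  have hr : 0 < r := by omega
  set C : ℕ := r.choose k with hCdef
  set Cp : ℕ := r.choose p with hCpdef
  have hC1 : 1 ≤ C := Nat.choose_pos hrk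
  set e : ℝ := (p : ℝ) / (k : ℝ) with he
  have he0 : 0 ≤ e := by
    rw [he]; positivity
  set T : ℝ := (Cp : ℝ) * (C : ℝ) ^ (-e) with hT
  -- the index function
  set N : ℕ → ℕ := fun m => Nat.findGreatest (fun n => C * n ^ k ≤ m) m with hN
  have hNge : ∀ M m : ℕ, M ≤ m → C * M ^ k ≤ m → M ≤ N m := by
    intro M m h1 h2
    exact Nat.le_findGreatest h1 h2
  have hNtop : Tendsto N atTop atTop := by
    rw [Filter.tendsto_atTop_atTop]
    intro M
    refine ⟨max M (C * M ^ k), fun m hm => ?_⟩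
    exact hNge M m (le_trans (le_max_left _ _) hm) (le_trans (le_max_right _ _) hm)
  have hNub : ∀ m : ℕ, C ≤ m → C * (N m) ^ k ≤ m := by
    intro m hm
    exact Nat.findGreatest_spec (P := fun n => C * n ^ k ≤ m) (m := 1)
      (by omega) (by simpa using hm)
  have hN1 : ∀ m : ℕ, C ≤ m → 1 ≤ N m := by
    intro m hm
    exact Nat.le_findGreatest (by omega) (by simpa using hm)
  have hNlb : ∀ m : ℕ, C ≤ m → m < C * (N m + 1) ^ k := by
    intro m hm
    rcases le_or_gt (N m + 1) m with h | h
    · by_contra hcon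
      exact Nat.findGreatest_is_greatest (P := fun n => C * n ^ k ≤ m) (k := N m + 1)
        (Nat.lt_succ_self _) h (by omega)
    · have h1 : m + 1 ≤ (m + 1) ^ k := Nat.le_self_pow hk0 _
      have h2 : (m + 1) ^ k ≤ (N m + 1) ^ k := Nat.pow_le_pow_left (by omega) _
      calc m < m + 1 := by omega
      _ ≤ (N m + 1) ^ k := le_trans h1 h2
      _ ≤ C * (N m + 1) ^ k := Nat.le_mul_of_pos_left _ hC1
  -- the bounding sequences
  set L : ℕ → ℝ := fun n => ((Cp : ℝ) * (n : ℝ) ^ p) / (((C : ℝ) * ((n : ℝ) + 1) ^ k) ^ e)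
    with hL
  set U : ℕ → ℝ := fun n => ((Cp : ℝ) * ((n : ℝ) + 1) ^ p) / (((C : ℝ) * (n : ℝ) ^ k) ^ e)
    with hU
  have hCpos : (0 : ℝ) < (C : ℝ) := by exact_mod_cast hC1
  have hCe : (0 : ℝ) < (C : ℝ) ^ e := Real.rpow_pos_of_pos hCpos _
  -- L n = T * (n/(n+1))^p
  have hLeq : ∀ n : ℕ, L n = T * ((n : ℝ) / ((n : ℝ) + 1)) ^ p := by
    intro n
    have hn1 : (0 : ℝ) < (n : ℝ) + 1 := by positivity
    rw [hL, hT]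
    simp only
    rw [rpow_helper _ _ (le_of_lt hCpos) (le_of_lt hn1) p k hk0,
      Real.rpow_neg (le_of_lt hCpos), div_pow]
    field_simp
    rw [he]
  have hUeq : ∀ n : ℕ, 1 ≤ n → U n = T * (((n : ℝ) + 1) / (n : ℝ)) ^ p := by
    intro n hn
    have hn0 : (0 : ℝ) < (n : ℝ) := by exact_mod_cast hn
    rw [hU, hT]
    simp only
    rw [rpow_helper _ _ (le_of_lt hCpos) (le_of_lt hn0) p k hk0,
      Real.rpow_neg (le_of_lt hCpos), div_pow]
    have : ((n : ℝ)) ^ p ≠ 0 := by positivity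
    field_simp
    rw [he]
  have hLtend : Tendsto L atTop (nhds T) := by
    have h1 : Tendsto (fun n : ℕ => ((n : ℝ) / ((n : ℝ) + 1)) ^ p) atTop (nhds 1) := by
      have := (tendsto_natCast_div_add_atTop (1 : ℝ)).pow p
      simpa using this
    have h2 := h1.const_mul T
    rw [mul_one] at h2
    exact h2.congr (fun n => (hLeq n).symm)
  have hUtend : Tendsto U atTop (nhds T) := by
    have h0 : Tendsto (fun n : ℕ => ((n : ℝ) + 1) / (n : ℝ)) atTop (nhds 1) := by
      have h1 : Tendsto (fun n : ℕ => 1 + 1 / (n : ℝ)) atTop (nhds 1) := by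
        have := tendsto_one_div_atTop_nhds_zero_nat.const_add (1 : ℝ)
        simpa using this
      apply h1.congr'
      filter_upwards [eventually_ge_atTop 1] with n hn
      have hn0 : (n : ℝ) ≠ 0 := by
        have : (0:ℝ) < (n:ℝ) := by exact_mod_cast hn
        linarith
      field_simp
    have h1 := (h0.pow p).const_mul T
    simp only [one_pow, mul_one] at h1
    apply h1.congr'
    filter_upwards [eventually_ge_atTop 1] with n hn
    exact (hUeq n hn).symm
  have hLNtend : Tendsto (fun m => L (N m)) atTop (nhds T) := hLtend.comp hNtop
  have hUNtend : Tendsto (fun m => U (N m)) atTop (nhds T) := hUtend.comp hNtop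
  -- eventual bounds
  have hlow : ∀ᶠ m in atTop, L (N m) ≤ g m / (m : ℝ) ^ e := by
    filter_upwards [eventually_ge_atTop C] with m hm
    have hn1 := hN1 m hm
    have hub := hNub m hm
    have hlb := hNlb m hm
    have hm0 : 0 < m := lt_of_lt_of_le hC1 hm
    have hcnt := turan_count (N m) r k hr
    have hcnt1 := turan_count (N m + 1) r k hr
    have hcp := turan_count (N m) r p hr
    have hcp1 := turan_count (N m + 1) r p hr
    obtain ⟨hg1, hg2⟩ := hg m (N m) hm0 hn1
      (by rw [hcnt]; exact hub) (by rw [hcnt1]; exact le_of_lt hlb)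
    rw [hcp] at hg1
    rw [hcp1] at hg2
    rw [hL]
    simp only
    apply div_le_div₀
    · exact le_trans (Nat.cast_nonneg _) hg1
    · push_cast at hg1
      exact hg1
    · exact Real.rpow_pos_of_pos (by exact_mod_cast hm0) _
    · apply Real.rpow_le_rpow (Nat.cast_nonneg _) ?_ he0
      have h := le_of_lt hlb
      have : (m : ℝ) ≤ ((C * (N m + 1) ^ k : ℕ) : ℝ) := by exact_mod_cast h
      push_cast at this
      push_cast
      linarith
  have hupp : ∀ᶠ m in atTop, g m / (m : ℝ) ^ e ≤ U (N m) := by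
    filter_upwards [eventually_ge_atTop C] with m hm
    have hn1 := hN1 m hm
    have hub := hNub m hm
    have hlb := hNlb m hm
    have hm0 : 0 < m := lt_of_lt_of_le hC1 hm
    have hcnt := turan_count (N m) r k hr
    have hcnt1 := turan_count (N m + 1) r k hr
    have hcp1 := turan_count (N m + 1) r p hr
    obtain ⟨hg1, hg2⟩ := hg m (N m) hm0 hn1
      (by rw [hcnt]; exact hub) (by rw [hcnt1]; exact le_of_lt hlb)
    rw [hcp1] at hg2
    rw [hU]
    simp only
    apply div_le_div₀
    · positivity
    · push_cast at hg2
      exact hg2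
    · apply Real.rpow_pos_of_pos ?_ _
      have hnpos : (0:ℝ) < ((N m : ℝ)) := by exact_mod_cast hn1
      positivity
    · apply Real.rpow_le_rpow (by positivity) ?_ he0
      have : ((C * (N m) ^ k : ℕ) : ℝ) ≤ (m : ℝ) := by exact_mod_cast hub
      push_cast at this
      linarith
  exact tendsto_of_tendsto_of_tendsto_of_le_of_le' hLNtend hUNtend hlow hupp
end

section
/- (Kruskal–Katona, inequality direction.) Let Δ be a simplicial complex, let k ≥ 2 be an integer, and let m = f_{k-1}(Δ) > 0. Write m = C(n_k,k) + C(n_{k-1},k-1) + … + C(n_{k-s},k-s) with s ≥ 0 and n_k > n_{k-1} > … > n_{k-s} ≥ k-s > 0. Then f_{k-2}(Δ) ≥ C(n_k,k-1) + C(n_{k-1},k-2) + … + C(n_{k-s},k-s-1), where C(a,b) denotes the binomial coefficient. -/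
attribute [-instance] instDecidableEqFin

open Finset Finset.Colex

/-- The cascade initial segment family: given `L = [a₀, a₁, …]` and size `j`,
`casc L j` consists of all `j`-subsets of `range a₀` together with `{a₀} ∪ S`
for `S` in the cascade family of the tail with size `j-1`. -/
def casc : List ℕ → ℕ → Finset (Finset ℕ)
  | [], _ => ∅
  | (a :: l), j => powersetCard j (range a) ∪ (casc l (j - 1)).image (insert a)

lemma casc_nil (j : ℕ) : casc [] j = ∅ := rfl

lemma casc_cons (a : ℕ) (l : List ℕ) (j : ℕ) :
    casc (a :: l) j = powersetCard j (range a) ∪ (casc l (j - 1)).image (insert a) := rfl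

/-- Every element of a member of `casc (a :: l) j` is at most `a`. -/
lemma casc_le_head : ∀ (l : List ℕ) (a j : ℕ), List.Chain' (· > ·) (a :: l) →
    ∀ S ∈ casc (a :: l) j, ∀ x ∈ S, x ≤ a := by
  intro l
  induction l with
  | nil =>
    intro a j _ S hS x hx
    simp only [casc_cons, casc_nil, image_empty, union_empty, mem_powersetCard] at hS
    exact le_of_lt (mem_range.1 (hS.1 hx))
  | cons b l ih =>
    intro a j hchain S hS x hx
    rw [casc_cons, mem_union] at hS
    rcases hS with hS | hS
    · exact le_of_lt (mem_range.1 ((mem_powersetCard.1 hS).1 hx))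
    · obtain ⟨S', hS', rfl⟩ := mem_image.1 hS
      rcases mem_insert.1 hx with rfl | hx'
      · exact le_rfl
      · have hba : b < a := (List.isChain_cons_cons.1 hchain).1
        exact le_of_lt (lt_of_le_of_lt (ih b (j - 1) (List.isChain_cons_cons.1 hchain).2 S' hS' x hx') hba)

lemma head_not_mem_casc {a : ℕ} {l : List ℕ} (hchain : List.Chain' (· > ·) (a :: l)) {j : ℕ}
    {S : Finset ℕ} (hS : S ∈ casc l j) : a ∉ S := by
  intro ha
  cases l with
  | nil => simp [casc_nil] at hS
  | cons b l' =>
    have := casc_le_head l' b j (List.isChain_cons_cons.1 hchain).2 S hS a ha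
    exact absurd (List.isChain_cons_cons.1 hchain).1 (by omega)

/-- Cardinality of the cascade family. -/
lemma casc_card : ∀ (L : List ℕ) (j : ℕ), List.Chain' (· > ·) L →
    #(casc L j) = ∑ i ∈ range L.length, Nat.choose (L.getD i 0) (j - i) := by
  intro L
  induction L with
  | nil => simp [casc_nil]
  | cons a l ih =>
    intro j hchain
    have hdisj : Disjoint (powersetCard j (range a)) ((casc l (j - 1)).image (insert a)) := by
      rw [disjoint_left]
      intro S hS hS'
      obtain ⟨S', hS', rfl⟩ := mem_image.1 hS'
      have : a ∈ range a := (mem_powersetCard.1 hS).1 (mem_insert_self a S')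
      exact absurd (mem_range.1 this) (lt_irrefl a)
    rw [casc_cons, card_union_of_disjoint hdisj, card_powersetCard, card_range,
      card_image_of_injOn, ih (j - 1) hchain.tail]
    · rw [List.length_cons, Finset.sum_range_succ' _ l.length]
      simp only [List.getD_cons_succ, List.getD_cons_zero, Nat.sub_zero, add_comm]
      congr 1
      apply Finset.sum_congr rfl
      intro i _
      congr 1
      omega
    · intro S hS T hT hST
      have haS : a ∉ S := head_not_mem_casc hchain (by simpa using hS)
      have haT : a ∉ T := head_not_mem_casc hchain (by simpa using hT)
      have : insert a S = insert a T := hST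
      ext x
      constructor
      · intro hx
        have : x ∈ insert a T := this ▸ mem_insert_of_mem hx
        rcases mem_insert.1 this with rfl | h
        · exact absurd hx haS
        · exact h
      · intro hx
        have : x ∈ insert a S := this ▸ mem_insert_of_mem hx
        rcases mem_insert.1 this with rfl | h
        · exact absurd hx haT
        · exact h

/-- Every member of `casc L j` has cardinality `j`, provided `L.length ≤ j + 1`. -/
lemma casc_sized : ∀ (L : List ℕ) (j : ℕ), List.Chain' (· > ·) L → L.length ≤ j + 1 →
    ∀ S ∈ casc L j, #S = j := by
  intro L
  induction L with
  | nil => simp [casc_nil]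
  | cons a l ih =>
    intro j hchain hlen S hS
    rw [casc_cons, mem_union] at hS
    rcases hS with hS | hS
    · exact (mem_powersetCard.1 hS).2
    · obtain ⟨S', hS', rfl⟩ := mem_image.1 hS
      have hl : l ≠ [] := by
        rintro rfl
        simp [casc_nil] at hS'
      have hlen' : 1 ≤ l.length := by
        cases l; · exact absurd rfl hl
        · simp
      have hj : 1 ≤ j := by
        simp only [List.length_cons] at hlen; omega
      have := ih (j - 1) hchain.tail (by simp at hlen ⊢; omega) S' hS'
      rw [card_insert_of_notMem (head_not_mem_casc hchain hS'), this]
      omega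

/-- `casc L j` is downward closed in the colex order among `j`-sets. -/
lemma casc_initSeg : ∀ (L : List ℕ) (j : ℕ), List.Chain' (· > ·) L →
    ∀ S ∈ casc L j, ∀ T : Finset ℕ, #T = j → toColex T < toColex S →
    T ∈ casc L j := by
  intro L
  induction L with
  | nil => simp [casc]
  | cons a l ih =>
    intro j hchain S hS T hT hTS
    have hSa : ∀ x ∈ S, x < a + 1 := fun x hx =>
      Nat.lt_succ_of_le (casc_le_head l a j hchain S hS x hx)
    have hTa : ∀ x ∈ T, x < a + 1 :=
      Finset.Colex.forall_lt_mono hTS.le hSa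
    rw [casc_cons, mem_union] at hS ⊢
    by_cases haT : a ∈ T
    · -- a ∈ T; then S must be of the form insert a S'
      rcases hS with hS | hS
      · -- impossible: S ⊆ range a, so all of T < a
        have : ∀ x ∈ T, x < a :=
          Finset.Colex.forall_lt_mono hTS.le
            (fun x hx => mem_range.1 ((mem_powersetCard.1 hS).1 hx))
        exact absurd (this a haT) (lt_irrefl a)
      · obtain ⟨S', hS', rfl⟩ := mem_image.1 hS
        have haS' : a ∉ S' := head_not_mem_casc hchain hS'
        have hinsT : insert a (T.erase a) = T := insert_erase haT
        have h1 : ({a} : Finset ℕ) ⊆ T := singleton_subset_iff.2 haT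
        have h2 : ({a} : Finset ℕ) ⊆ insert a S' := singleton_subset_iff.2 (mem_insert_self _ _)
        have key : toColex (T \ {a}) < toColex ((insert a S') \ {a}) :=
          (Finset.Colex.toColex_sdiff_lt_toColex_sdiff h1 h2).2 hTS
        have e1 : T \ {a} = T.erase a := by rw [sdiff_singleton_eq_erase]
        have e2 : (insert a S') \ {a} = S' := by
          rw [sdiff_singleton_eq_erase, erase_insert haS']
        rw [e1, e2] at key
        have hT' : #(T.erase a) = j - 1 := by
          rw [card_erase_of_mem haT, hT]
        have : T.erase a ∈ casc l (j - 1) := ih (j - 1) hchain.tail S' hS' _ hT' key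
        right
        exact mem_image.2 ⟨T.erase a, this, hinsT⟩
    · -- a ∉ T; T ⊆ range a
      left
      rw [mem_powersetCard]
      refine ⟨fun x hx => mem_range.2 ?_, hT⟩
      have := hTa x hx
      rcases Nat.lt_succ_iff_lt_or_eq.1 this with h | rfl
      · exact h
      · exact absurd hx haT

/-- Every member of `casc L j` extends to a member of `casc L (j+1)`. -/
lemma casc_witness : ∀ (L : List ℕ) (j : ℕ), List.Chain' (· > ·) L → L.length ≤ j + 1 →
    (∀ i < L.length, j - i < L.getD i 0) →
    ∀ w ∈ casc L j, ∃ x ∉ w, insert x w ∈ casc L (j + 1) := by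
  intro L
  induction L with
  | nil => simp [casc]
  | cons a l ih =>
    intro j hchain hlen hbig w hw
    rw [casc_cons, mem_union] at hw
    rcases hw with hw | hw
    · -- w ⊆ range a, |w| = j < a : extend inside range a
      rw [mem_powersetCard] at hw
      have hja : j < a := by simpa using hbig 0 (by simp)
      obtain ⟨x, hxmem⟩ : (range a \ w).Nonempty := by
        rw [← card_pos, card_sdiff_of_subset hw.1, card_range, hw.2]
        omega
      obtain ⟨hx, hxw⟩ := mem_sdiff.1 hxmem
      refine ⟨x, hxw, ?_⟩
      rw [casc_cons, mem_union]
      left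
      rw [mem_powersetCard]
      exact ⟨insert_subset hx hw.1, by rw [card_insert_of_notMem hxw, hw.2]⟩
    · obtain ⟨w', hw', rfl⟩ := mem_image.1 hw
      have hl : l ≠ [] := by rintro rfl; simp [casc] at hw'
      obtain ⟨b, l', rfl⟩ : ∃ b l', l = b :: l' := by
        cases l; · exact absurd rfl hl
        · exact ⟨_, _, rfl⟩
      have hj : 1 ≤ j := by simp at hlen; omega
      obtain ⟨x, hxw', hx⟩ := ih (j - 1) hchain.tail (by simp at hlen ⊢; omega)
        (by intro i hi
            have := hbig (i + 1) (by simpa using Nat.succ_lt_succ hi)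
            simpa using (by omega : j - 1 - i < (a :: b :: l').getD (i+1) 0)) w' hw'
      have hj1 : j - 1 + 1 = j := by omega
      rw [hj1] at hx
      have hxa : x < a := by
        have := casc_le_head l' b j (List.isChain_cons_cons.1 hchain).2 _ hx x (mem_insert_self _ _)
        have hba : b < a := (List.isChain_cons_cons.1 hchain).1
        omega
      have haw' : a ∉ w' := head_not_mem_casc hchain hw'
      refine ⟨x, ?_, ?_⟩
      · simp only [mem_insert, not_or]
        exact ⟨by omega, hxw'⟩
      · rw [casc_cons, mem_union]
        right
        rw [Finset.insert_comm]
        refine mem_image.2 ⟨insert x w', ?_, rfl⟩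
        simpa [hj1, Nat.add_sub_cancel] using hx

/-- Quantitative gap for strictly decreasing lists of naturals. -/
lemma chain_gap (L : List ℕ) (h : List.Chain' (· > ·) L) :
    ∀ d i, i + d < L.length → L.getD (i + d) 0 + d ≤ L.getD i 0 := by
  have hp := List.isChain_iff_pairwise.1 h
  rw [List.pairwise_iff_getElem] at hp
  intro d
  induction d with
  | zero => simp
  | succ d ih =>
    intro i hi
    have h1 : L[i + d + 1] < L[i + d] := hp (i + d) (i + d + 1) (by omega) (by omega) (by omega)
    have h2 := ih i (by omega)
    rw [List.getD_eq_getElem _ _ (by omega : i + d < L.length)] at h2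
    rw [List.getD_eq_getElem _ _ (by omega : i + (d + 1) < L.length)]
    have e3 : L[i + (d + 1)] = L[i + d + 1] := by congr 1
    omega

lemma getLastD_eq_getD : ∀ (l : List ℕ) (a : ℕ),
    (a :: l).getLastD 0 = (a :: l).getD ((a :: l).length - 1) 0 := by
  intro l
  induction l with
  | nil => intro a; rfl
  | cons b l ih =>
    intro a
    have h1 : (a :: b :: l).getLastD 0 = (b :: l).getLastD 0 := by
      simp [List.getLastD]
    rw [h1, ih b]
    have h2 : (a :: b :: l).length - 1 = ((b :: l).length - 1) + 1 := by
      simp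
    rw [h2, List.getD_cons_succ]

/-- The number of faces of `Δ` with exactly `i` vertices (i.e. `f_{i-1}(Δ)`). -/
def faceCount {V : Type*} [DecidableEq V] (Δ : Finset (Finset V)) (i : ℕ) : ℕ :=
  (Δ.filter fun s => s.card = i).card

set_option maxHeartbeats 1000000 in
/-- Kruskal–Katona, inequality direction.  The cascade `m = C(n_k,k) + … + C(n_{k-s},k-s)`
is encoded as the list `L = [n_k, n_{k-1}, …, n_{k-s}]` (so `s = L.length - 1`). -/
theorem stmt18 {V : Type*} [DecidableEq V] (Δ : Finset (Finset V))
    (hΔ : ∀ B ∈ Δ, ∀ A ⊆ B, A ∈ Δ)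
    (k : ℕ) (hk : 2 ≤ k) (hm : 0 < faceCount Δ k)
    (L : List ℕ) (hL : L ≠ [])
    (hsum : faceCount Δ k = ∑ i ∈ Finset.range L.length, Nat.choose (L.getD i 0) (k - i))
    (hchain : L.Chain' (· > ·))
    (hlen : L.length ≤ k)
    (hlast : k - (L.length - 1) ≤ L.getLastD 0) :
    faceCount Δ (k - 1) ≥
      ∑ i ∈ Finset.range L.length, Nat.choose (L.getD i 0) (k - 1 - i) := by
  -- the family of `k`-faces
  set 𝒜₀ := Δ.filter (fun s => #s = k) with h𝒜₀
  set m := #𝒜₀ with hmdef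
  have hm0 : 0 < m := hm
  have hmsum : m = ∑ i ∈ Finset.range L.length, Nat.choose (L.getD i 0) (k - i) := hsum
  -- ground set
  set U := 𝒜₀.sup id with hUdef
  have hsub : ∀ s ∈ 𝒜₀, s ⊆ U := fun s hs => Finset.le_sup (f := id) hs
  set n := #U with hndef
  have hlpos : 0 < L.length := List.length_pos_iff.2 hL
  -- quantitative bound on entries of `L`
  have haik : ∀ i < L.length, k - i ≤ L.getD i 0 := by
    intro i hi
    have hgap := chain_gap L hchain (L.length - 1 - i) i (by omega)
    have hlast' : k - (L.length - 1) ≤ L.getD (L.length - 1) 0 := by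
      obtain ⟨a, l, rfl⟩ := List.exists_cons_of_ne_nil hL
      rwa [getLastD_eq_getD] at hlast
    have hidx : i + (L.length - 1 - i) = L.length - 1 := by omega
    rw [hidx] at hgap
    omega
  have hkn : k ≤ n := by
    obtain ⟨s, hs⟩ := Finset.card_pos.1 hm0
    have hsk : #s = k := (Finset.mem_filter.1 hs).2
    calc k = #s := hsk.symm
      _ ≤ #U := Finset.card_le_card (hsub s hs)
  have hn0 : 0 < n := by omega
  -- transfer to `Fin n`
  let e : {x // x ∈ U} ≃ Fin n := U.equivFin
  let F : Finset V → Finset (Fin n) := fun s => (s.subtype (· ∈ U)).map e.toEmbedding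
  let G : Finset (Fin n) → Finset V :=
    fun t => (t.map e.symm.toEmbedding).map (Function.Embedding.subtype _)
  have hGF : ∀ s ⊆ U, G (F s) = s := by
    intro s hsU
    ext x
    simp only [F, G, Finset.mem_map, Finset.mem_subtype, Function.Embedding.coe_subtype,
      Equiv.coe_toEmbedding]
    constructor
    · rintro ⟨y, ⟨z, ⟨w, hw, rfl⟩, rfl⟩, rfl⟩
      simpa using hw
    · intro hx
      exact ⟨⟨x, hsU hx⟩, ⟨e ⟨x, hsU hx⟩, ⟨⟨x, hsU hx⟩, by simpa using hx, rfl⟩, by simp⟩, rfl⟩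
  have hcardF : ∀ s ⊆ U, #(F s) = #s := by
    intro s hsU
    rw [Finset.card_map, Finset.card_subtype, Finset.filter_true_of_mem (fun x hx => hsU hx)]
  have hcardG : ∀ t, #(G t) = #t := by
    intro t
    simp [G, Finset.card_map]
  have hGmono : ∀ {t t' : Finset (Fin n)}, t ⊆ t' → G t ⊆ G t' := by
    intro t t' h
    exact Finset.map_subset_map.2 (Finset.map_subset_map.2 h)
  have hGinj : Function.Injective G := fun t t' h =>
    Finset.map_injective _ (Finset.map_injective _ h)
  set 𝒜' := 𝒜₀.image F with h𝒜'
  have hA'card : #𝒜' = m := by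
    rw [h𝒜']
    apply Finset.card_image_of_injOn
    intro s hs t ht h
    rw [← hGF s (hsub s hs), h, hGF t (hsub t ht)]
  have hA'sized : Set.Sized k (𝒜' : Set (Finset (Fin n))) := by
    intro s hs
    obtain ⟨s₀, hs₀, rfl⟩ := Finset.mem_image.1 hs
    rw [hcardF s₀ (hsub s₀ hs₀)]
    exact (Finset.mem_filter.1 hs₀).2
  -- shadow of `𝒜'` injects into the `(k-1)`-faces
  have hshadow : #(𝒜'.shadow) ≤ faceCount Δ (k - 1) := by
    apply Finset.card_le_card_of_injOn G _ (fun t _ t' _ h => hGinj h)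
    intro t ht
    rw [Finset.mem_coe, Finset.mem_shadow_iff_insert_mem] at ht
    obtain ⟨a, ha, hins⟩ := ht
    obtain ⟨s₀, hs₀, hFs₀⟩ := Finset.mem_image.1 hins
    have hs₀U : s₀ ⊆ U := hsub s₀ hs₀
    have hGt : G t ⊆ s₀ := by
      have h1 : G t ⊆ G (insert a t) := hGmono (Finset.subset_insert a t)
      rwa [← hFs₀, hGF s₀ hs₀U] at h1
    have hcardt : #t = k - 1 := by
      have h1 : #(insert a t) = k := by
        rw [← hFs₀, hcardF s₀ hs₀U]
        exact (Finset.mem_filter.1 hs₀).2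
      rw [Finset.card_insert_of_notMem ha] at h1
      omega
    rw [Finset.mem_coe, Finset.mem_filter]
    exact ⟨hΔ s₀ (Finset.mem_filter.1 hs₀).1 (G t) hGt, by rw [hcardG, hcardt]⟩
  -- numeric bounds on the head of `L`
  have hC1 : Nat.choose (L.getD 0 0) k ≤ m := by
    have h0 : (0 : ℕ) ∈ Finset.range L.length := Finset.mem_range.2 hlpos
    have := Finset.single_le_sum (f := fun i => Nat.choose (L.getD i 0) (k - i))
      (fun i _ => Nat.zero_le _) h0
    simpa [hmsum] using this
  have hmCnk : m ≤ Nat.choose n k := by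
    have hsub' : 𝒜' ⊆ Finset.powersetCard k (Finset.univ : Finset (Fin n)) := by
      intro s hs
      rw [Finset.mem_powersetCard_univ]
      exact hA'sized hs
    have := Finset.card_le_card hsub'
    rwa [hA'card, Finset.card_powersetCard, Finset.card_univ, Fintype.card_fin] at this
  have ha0n : L.getD 0 0 ≤ n := by
    by_contra h
    push_neg at h
    have h1 : Nat.choose (n + 1) k ≤ Nat.choose (L.getD 0 0) k := Nat.choose_le_choose k h
    have h2 : Nat.choose n k < Nat.choose (n + 1) k := by
      have hkk : k - 1 + 1 = k := by omega
      have h3 := Nat.choose_succ_succ n (k - 1)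
      simp only [Nat.succ_eq_add_one] at h3
      rw [hkk] at h3
      have hpos : 0 < Nat.choose n (k - 1) := Nat.choose_pos (by omega)
      omega
    omega
  have ha0n' : 2 ≤ L.length → L.getD 0 0 < n := by
    intro h2len
    have hsub01 : ({0, 1} : Finset ℕ) ⊆ Finset.range L.length := by
      intro x hx
      simp only [Finset.mem_insert, Finset.mem_singleton] at hx
      rcases hx with rfl | rfl <;> (rw [Finset.mem_range]; omega)
    have hC2 : Nat.choose (L.getD 0 0) k + Nat.choose (L.getD 1 0) (k - 1) ≤ m := by
      have h4 := Finset.sum_le_sum_of_subset (f := fun i => Nat.choose (L.getD i 0) (k - i)) hsub01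
      rw [Finset.sum_pair (by norm_num : (0 : ℕ) ≠ 1)] at h4
      simpa [hmsum] using h4
    have hpos : 0 < Nat.choose (L.getD 1 0) (k - 1) := Nat.choose_pos (haik 1 (by omega))
    by_contra h
    push_neg at h
    have := Nat.choose_le_choose k h
    omega
  -- all elements of cascade members are `< n`
  have hbound : ∀ j S, S ∈ casc L j → ∀ x ∈ S, x < n := by
    intro j S hS x hx
    obtain ⟨a0, l, rfl⟩ := List.exists_cons_of_ne_nil hL
    have hxa : x ≤ a0 := casc_le_head l a0 j hchain S hS x hx
    cases l with
    | nil =>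
      have hS' : S ∈ Finset.powersetCard j (Finset.range a0) := by
        simpa [casc_cons, casc_nil] using hS
      have hxlt : x < a0 := Finset.mem_range.1 ((Finset.mem_powersetCard.1 hS').1 hx)
      have : a0 ≤ n := by simpa using ha0n
      omega
    | cons b l' =>
      have : a0 < n := by simpa using ha0n' (by simp)
      omega
  -- the colex initial segment in `Fin n`
  set 𝒞 : Finset (Finset (Fin n)) :=
    (Finset.powersetCard k (Finset.univ : Finset (Fin n))).filter
      (fun t => t.image Fin.val ∈ casc L k) with h𝒞
  have h𝒞sized : Set.Sized k (𝒞 : Set (Finset (Fin n))) := fun t ht =>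
    (Finset.mem_powersetCard.1 (Finset.mem_filter.1 ht).1).2
  have h𝒞m : #𝒞 ≤ #𝒜' := by
    rw [hA'card]
    have h5 : #𝒞 ≤ #(casc L k) :=
      Finset.card_le_card_of_injOn (s := 𝒞) (t := casc L k) (fun t => t.image Fin.val)
        (fun t ht => (Finset.mem_filter.1 ht).2)
        (fun t _ t' _ h => Finset.image_injective Fin.val_injective h)
    rw [casc_card L k hchain] at h5
    omega
  have hinit : Finset.Colex.IsInitSeg 𝒞 k := by
    constructor
    · exact h𝒞sized
    · rintro s t hs ⟨hts, htcard⟩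
      rw [h𝒞, Finset.mem_filter] at hs ⊢
      refine ⟨Finset.mem_powersetCard_univ.2 htcard, ?_⟩
      apply casc_initSeg L k hchain (s.image Fin.val) hs.2 (t.image Fin.val)
      · rw [Finset.card_image_of_injective _ Fin.val_injective, htcard]
      · exact (Finset.Colex.toColex_image_lt_toColex_image Fin.val_strictMono).2 hts
  have kk := Finset.kruskal_katona hA'sized h𝒞m hinit
  -- lower bound on the shadow of `𝒞`
  let g : ℕ → Fin n := fun x => ⟨x % n, Nat.mod_lt x hn0⟩
  have himg : ∀ w : Finset ℕ, (∀ x ∈ w, x < n) → (w.image g).image Fin.val = w := by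
    intro w hw
    rw [Finset.image_image]
    have h6 : ∀ x ∈ w, (Fin.val ∘ g) x = id x := fun x hx => by
      simp [g, Nat.mod_eq_of_lt (hw x hx)]
    rw [Finset.image_congr h6, Finset.image_id]
  have hlow : #(casc L (k - 1)) ≤ #(𝒞.shadow) := by
    apply Finset.card_le_card_of_injOn (fun w => w.image g)
    · intro w hw
      have hwlt : ∀ x ∈ w, x < n := hbound (k - 1) w hw
      have hginj : Set.InjOn g w := by
        intro y hy z hz h
        have := congrArg Fin.val h
        simpa [g, Nat.mod_eq_of_lt (hwlt y hy), Nat.mod_eq_of_lt (hwlt z hz)] using this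
      obtain ⟨x, hxw, hx⟩ := casc_witness L (k - 1) hchain (by omega)
        (fun i hi => by have := haik i hi; omega) w hw
      have hk1 : k - 1 + 1 = k := by omega
      rw [hk1] at hx
      have hxn : x < n := hbound k _ hx x (Finset.mem_insert_self _ _)
      have hgxval : (g x : ℕ) = x := by simp [g, Nat.mod_eq_of_lt hxn]
      have hgxnot : g x ∉ w.image g := by
        intro hgx
        obtain ⟨y, hy, hgy⟩ := Finset.mem_image.1 hgx
        have hyx : y = x := by
          have := congrArg Fin.val hgy
          simpa [g, Nat.mod_eq_of_lt (hwlt y hy), Nat.mod_eq_of_lt hxn] using this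
        exact hxw (hyx ▸ hy)
      rw [Finset.mem_coe, Finset.mem_shadow_iff_insert_mem]
      refine ⟨g x, hgxnot, ?_⟩
      rw [h𝒞, Finset.mem_filter]
      have himgins : (insert (g x) (w.image g)).image Fin.val = insert x w := by
        rw [Finset.image_insert, himg w hwlt, hgxval]
      constructor
      · rw [Finset.mem_powersetCard_univ, Finset.card_insert_of_notMem hgxnot,
          Finset.card_image_of_injOn hginj]
        have := casc_sized L (k - 1) hchain (by omega) w hw
        omega
      · rw [himgins]
        exact hx
    · intro w hw w' hw' h
      have h1 := himg w (hbound (k - 1) w hw)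
      have h2 := himg w' (hbound (k - 1) w' hw')
      rw [← h1, ← h2]
      simp only at h
      rw [h]
  calc ∑ i ∈ Finset.range L.length, Nat.choose (L.getD i 0) (k - 1 - i)
      = #(casc L (k - 1)) := (casc_card L (k - 1) hchain).symm
    _ ≤ #(𝒞.shadow) := hlow
    _ ≤ #(𝒜'.shadow) := kk
    _ ≤ faceCount Δ (k - 1) := hshadow
end
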